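/- Fix a constant k > 0 and a function L : ℕ → ℕ with 1 ≤ L(M) ≤ M for all M, L(M) → ∞, and L(M)/M → 0 as M → ∞. Then √(2·log(M−L(M))) − √(k·log M / L(M)) − √(log L(M) / 2) → ∞ as M → ∞. -/

import Mathlib

open Filter

lemma sqrt_add_le' (x y : ℝ) (hx : 0 ≤ x) (hy : 0 ≤ y) :
    Real.sqrt (x + y) ≤ Real.sqrt x + Real.sqrt y := by
  have h1 := Real.sq_sqrt hx
  have h2 := Real.sq_sqrt hy
  have h3 := Real.sqrt_nonneg x
  have h4 := Real.sqrt_nonneg y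
  have : x + y ≤ (Real.sqrt x + Real.sqrt y) ^ 2 := by nlinarith [mul_nonneg h3 h4]
  calc Real.sqrt (x + y) ≤ Real.sqrt ((Real.sqrt x + Real.sqrt y) ^ 2) :=
        Real.sqrt_le_sqrt this
    _ = Real.sqrt x + Real.sqrt y := Real.sqrt_sq (by positivity)

/-- Dominance comparison for part (b): if `L M → ∞` and `L M / M → 0`,
then the asymptotic mean of the largest of `M − L` standard Gaussians dominates the
asymptotic mean of the smallest of the `L` signal Gaussians, with gap tending to `∞`. -/
theorem dominance_gap_part_b
    (k : ℝ) (hk : 0 < k)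
    (L : ℕ → ℕ) (hL1 : ∀ M, 1 ≤ L M) (hLM : ∀ M, L M ≤ M)
    (hLinf : Tendsto (fun M => (L M : ℝ)) atTop atTop)
    (hLlin : Tendsto (fun M => (L M : ℝ) / M) atTop (nhds 0)) :
    Tendsto (fun M : ℕ =>
        Real.sqrt (2 * Real.log ((M : ℝ) - L M))
          - Real.sqrt (k * Real.log M / L M)
          - Real.sqrt (Real.log (L M) / 2))
      atTop atTop := by
  have hg : Tendsto (fun M : ℕ => (1/2) * Real.sqrt (Real.log M) - Real.sqrt (2 * Real.log 2))
      atTop atTop := by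
    have h1 : Tendsto (fun M : ℕ => Real.log M) atTop atTop :=
      Real.tendsto_log_atTop.comp tendsto_natCast_atTop_atTop
    have hsq : Tendsto Real.sqrt atTop atTop :=
      tendsto_atTop_atTop_of_monotone (fun x y h => Real.sqrt_le_sqrt h)
        (fun b => ⟨b ^ 2, by rw [Real.sqrt_sq_eq_abs]; exact le_abs_self b⟩)
    have h2 : Tendsto (fun M : ℕ => Real.sqrt (Real.log M)) atTop atTop :=
      hsq.comp h1
    have h3 := h2.const_mul_atTop (show (0:ℝ) < 1/2 by norm_num)
    simpa [sub_eq_add_neg] using tendsto_atTop_add_const_right atTop (-(Real.sqrt (2 * Real.log 2))) h3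
  refine tendsto_atTop_mono' atTop ?_ hg
  have e1 : ∀ᶠ M : ℕ in atTop, (L M : ℝ) / M ≤ 1/2 :=
    hLlin.eventually (eventually_le_nhds (by norm_num))
  have e2 : ∀ᶠ M : ℕ in atTop, 100 * k ≤ (L M : ℝ) := hLinf.eventually_ge_atTop _
  filter_upwards [e1, e2, eventually_ge_atTop 2] with M hhalf' h100 hM2
  set a : ℝ := (M : ℝ) with ha_def
  set l : ℝ := (L M : ℝ) with hl_def
  have ha : (2:ℝ) ≤ a := by rw [ha_def]; exact_mod_cast hM2
  have hl1 : (1:ℝ) ≤ l := by rw [hl_def]; exact_mod_cast hL1 M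
  have hla : l ≤ a := by rw [hl_def, ha_def]; exact_mod_cast hLM M
  have hapos : (0:ℝ) < a := by linarith
  have hhalf : l ≤ a / 2 := by
    rw [div_le_iff₀ hapos] at hhalf'
    linarith
  have hal1 : (1:ℝ) ≤ a - l := by linarith
  have loga0 : 0 ≤ Real.log a := Real.log_nonneg (by linarith)
  have logal0 : 0 ≤ Real.log (a - l) := Real.log_nonneg hal1
  have sqa0 : 0 ≤ Real.sqrt (Real.log a) := Real.sqrt_nonneg _
  -- T1 : √2·√(log a) − √(2 log 2) ≤ √(2 log(a−l))
  have T1 : Real.sqrt 2 * Real.sqrt (Real.log a) - Real.sqrt (2 * Real.log 2)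
      ≤ Real.sqrt (2 * Real.log (a - l)) := by
    have hle : Real.log a ≤ Real.log (a - l) + Real.log 2 := by
      have h1 : a ≤ 2 * (a - l) := by linarith
      have h2 : Real.log a ≤ Real.log (2 * (a - l)) :=
        Real.log_le_log hapos h1
      rwa [Real.log_mul (by norm_num) (by linarith), add_comm] at h2
    have step : Real.sqrt (2 * Real.log a)
        ≤ Real.sqrt (2 * Real.log (a - l)) + Real.sqrt (2 * Real.log 2) := by
      calc Real.sqrt (2 * Real.log a)
          ≤ Real.sqrt (2 * Real.log (a - l) + 2 * Real.log 2) := by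
            apply Real.sqrt_le_sqrt; linarith
        _ ≤ _ := sqrt_add_le' _ _ (by linarith)
              (by positivity)
    rw [Real.sqrt_mul (by norm_num) (Real.log a)] at step
    linarith
  -- T2 : √(k log a / l) ≤ √(log a)/10
  have T2 : Real.sqrt (k * Real.log a / l) ≤ Real.sqrt (Real.log a) / 10 := by
    have h1 : k * Real.log a / l ≤ Real.log a / 100 := by
      rw [div_le_div_iff₀ (by linarith) (by norm_num)]
      nlinarith [mul_le_mul_of_nonneg_right h100 loga0]
    calc Real.sqrt (k * Real.log a / l) ≤ Real.sqrt (Real.log a / 100) :=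
          Real.sqrt_le_sqrt h1
      _ = Real.sqrt (Real.log a) / 10 := by
          rw [show Real.log a / 100 = Real.log a * (1/10)^2 by ring,
            Real.sqrt_mul loga0, Real.sqrt_sq (by norm_num)]
          ring
  -- T3 : √(log l / 2) ≤ (3/4)·√(log a)
  have T3 : Real.sqrt (Real.log l / 2) ≤ (3/4) * Real.sqrt (Real.log a) := by
    have h1 : Real.log l ≤ Real.log a := Real.log_le_log (by linarith) hla
    have h2 : Real.sqrt (Real.log l / 2) ≤ Real.sqrt (Real.log a / 2) :=
      Real.sqrt_le_sqrt (by linarith)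
    have h3 : Real.sqrt (Real.log a / 2)
        = Real.sqrt (Real.log a) * Real.sqrt (1/2) := by
      rw [show Real.log a / 2 = Real.log a * (1/2) by ring, Real.sqrt_mul loga0]
    have h4 : Real.sqrt (1/2 : ℝ) ≤ 3/4 := by
      nlinarith [Real.sq_sqrt (show (0:ℝ) ≤ 1/2 by norm_num), Real.sqrt_nonneg (1/2 : ℝ)]
    calc Real.sqrt (Real.log l / 2) ≤ Real.sqrt (Real.log a) * Real.sqrt (1/2) :=
          h2.trans_eq h3
      _ ≤ (3/4) * Real.sqrt (Real.log a) := by nlinarith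
  have hsqrt2 : (7/5 : ℝ) ≤ Real.sqrt 2 := by
    nlinarith [Real.sq_sqrt (show (0:ℝ) ≤ 2 by norm_num), Real.sqrt_nonneg (2:ℝ)]
  have : (1/2) * Real.sqrt (Real.log a) - Real.sqrt (2 * Real.log 2)
      ≤ Real.sqrt (2 * Real.log (a - l))
        - Real.sqrt (k * Real.log a / l) - Real.sqrt (Real.log l / 2) := by
    nlinarith [mul_le_mul_of_nonneg_right hsqrt2 sqa0]
  simpa using this
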